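/- For every q ≥ 1, the function D_q is a metric on the set F of distribution functions on ℝ: it is nonnegative and finite, vanishes exactly when F = G, is symmetric, and satisfies the triangle inequality. -/

import Mathlib

open Filter Set

/-- A distribution function on ℝ: nondecreasing, right-continuous,
with limit 0 at -∞ and limit 1 at ∞. -/
def IsDistFun (F : ℝ → ℝ) : Prop :=
  Monotone F ∧ (∀ x, ContinuousWithinAt F (Set.Ici x) x) ∧
  Tendsto F atBot (nhds 0) ∧ Tendsto F atTop (nhds 1)

/-- Extended evaluation: index 0 ↦ F(-∞)=0, index q+1 ↦ F(∞)=1,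
indices 1..q ↦ F(vᵢ). -/
noncomputable def dext (q : ℕ) (F : ℝ → ℝ) (v : ℕ → ℝ) : ℕ → ℝ := fun i =>
  if i = 0 then 0 else if i = q + 1 then 1 else F (v i)

/-- r_{F,G}(v) = Σ_{i=0}^{q} min{F|_{vᵢ}^{vᵢ₊₁}, G|_{vᵢ}^{vᵢ₊₁}}. -/
noncomputable def rFG (q : ℕ) (F G : ℝ → ℝ) (v : ℕ → ℝ) : ℝ :=
  ∑ i ∈ Finset.range (q + 1),
    min (dext q F v (i + 1) - dext q F v i) (dext q G v (i + 1) - dext q G v i)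

/-- The statistic D_q(F, G) = 1 - inf over nondecreasing v ∈ ℝ^q of r_{F,G}(v). -/
noncomputable def Dq (q : ℕ) (F G : ℝ → ℝ) : ℝ :=
  1 - sInf {r | ∃ v : ℕ → ℝ, MonotoneOn v (Set.Icc 1 q) ∧ r = rFG q F G v}

namespace DqAux

lemma distFun_nonneg {F : ℝ → ℝ} (hF : IsDistFun F) (x : ℝ) : 0 ≤ F x :=
  le_of_tendsto hF.2.2.1 ((eventually_le_atBot x).mono fun _ hy => hF.1 hy)

lemma distFun_le_one {F : ℝ → ℝ} (hF : IsDistFun F) (x : ℝ) : F x ≤ 1 :=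
  ge_of_tendsto hF.2.2.2 ((eventually_ge_atTop x).mono fun _ hy => hF.1 hy)

lemma sum_dext (q : ℕ) (F : ℝ → ℝ) (v : ℕ → ℝ) :
    ∑ i ∈ Finset.range (q + 1), (dext q F v (i + 1) - dext q F v i) = 1 := by
  rw [Finset.sum_range_sub (fun i => dext q F v i)]
  simp [dext]

lemma rFG_le_one (q : ℕ) (F G : ℝ → ℝ) (v : ℕ → ℝ) : rFG q F G v ≤ 1 :=
  le_trans (Finset.sum_le_sum fun i _ => min_le_left _ _) (le_of_eq (sum_dext q F v))

lemma rFG_self (q : ℕ) (F : ℝ → ℝ) (v : ℕ → ℝ) : rFG q F F v = 1 := by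
  unfold rFG
  simp only [min_self]
  exact sum_dext q F v

lemma rFG_comm (q : ℕ) (F G : ℝ → ℝ) (v : ℕ → ℝ) : rFG q F G v = rFG q G F v := by
  unfold rFG
  simp only [min_comm]

lemma dext_step_nonneg {q : ℕ} (hq : 1 ≤ q) {F : ℝ → ℝ} (hF : IsDistFun F)
    {v : ℕ → ℝ} (hv : MonotoneOn v (Set.Icc 1 q)) {i : ℕ} (hi : i < q + 1) :
    0 ≤ dext q F v (i + 1) - dext q F v i := by
  rcases eq_or_ne i 0 with rfl | h0
  · have h1 : (0 : ℕ) + 1 ≠ q + 1 := by omega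
    simp [dext, h1, distFun_nonneg hF]
    rw [if_neg (by omega : q ≠ 0)]; exact distFun_nonneg hF _
  · rcases eq_or_ne i q with rfl | hiq
    · have hq1 : i ≠ i + 1 := by omega
      simp [dext, h0, hq1, distFun_le_one hF]
    · have h1 : i ≠ q + 1 := by omega
      have h2 : i + 1 ≠ 0 := by omega
      have h3 : i + 1 ≠ q + 1 := by omega
      simp only [dext, if_neg h0, if_neg h1, if_neg h2, if_neg h3, sub_nonneg]
      exact hF.1 (hv ⟨by omega, by omega⟩ ⟨by omega, by omega⟩ (by omega))

lemma rFG_nonneg {q : ℕ} (hq : 1 ≤ q) {F G : ℝ → ℝ} (hF : IsDistFun F) (hG : IsDistFun G)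
    {v : ℕ → ℝ} (hv : MonotoneOn v (Set.Icc 1 q)) : 0 ≤ rFG q F G v :=
  Finset.sum_nonneg fun i hi =>
    le_min (dext_step_nonneg hq hF hv (Finset.mem_range.mp hi))
      (dext_step_nonneg hq hG hv (Finset.mem_range.mp hi))

lemma set_nonempty (q : ℕ) (F G : ℝ → ℝ) :
    {r | ∃ v : ℕ → ℝ, MonotoneOn v (Set.Icc 1 q) ∧ r = rFG q F G v}.Nonempty :=
  ⟨rFG q F G (fun _ => 0), fun _ => 0, monotoneOn_const, rfl⟩

lemma set_bddBelow {q : ℕ} (hq : 1 ≤ q) {F G : ℝ → ℝ} (hF : IsDistFun F) (hG : IsDistFun G) :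
    BddBelow {r | ∃ v : ℕ → ℝ, MonotoneOn v (Set.Icc 1 q) ∧ r = rFG q F G v} :=
  ⟨0, fun _ ⟨_, hw, hr⟩ => hr ▸ rFG_nonneg hq hF hG hw⟩

lemma sInf_le_rFG {q : ℕ} (hq : 1 ≤ q) {F G : ℝ → ℝ} (hF : IsDistFun F) (hG : IsDistFun G)
    {v : ℕ → ℝ} (hv : MonotoneOn v (Set.Icc 1 q)) :
    sInf {r | ∃ v : ℕ → ℝ, MonotoneOn v (Set.Icc 1 q) ∧ r = rFG q F G v} ≤ rFG q F G v :=
  csInf_le (set_bddBelow hq hF hG) ⟨v, hv, rfl⟩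

lemma sInf_le_one {q : ℕ} (hq : 1 ≤ q) {F G : ℝ → ℝ} (hF : IsDistFun F) (hG : IsDistFun G) :
    sInf {r | ∃ v : ℕ → ℝ, MonotoneOn v (Set.Icc 1 q) ∧ r = rFG q F G v} ≤ 1 :=
  le_trans (sInf_le_rFG hq hF hG (monotoneOn_const (c := (0:ℝ)))) (rFG_le_one q F G _)

lemma rFG_const {q : ℕ} (hq : 1 ≤ q) (F G : ℝ → ℝ) (x : ℝ) :
    rFG q F G (fun _ => x) = min (F x) (G x) + min (1 - F x) (1 - G x) := by
  unfold rFG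
  rw [Finset.sum_range_succ]
  have hq0 : q ≠ 0 := by omega
  have hq1 : q ≠ q + 1 := by omega
  rw [Finset.sum_eq_single 0]
  · have h1 : (0 : ℕ) + 1 ≠ q + 1 := by omega
    simp [dext, h1, hq0, hq1]
  · intro i hi h0
    have hi' := Finset.mem_range.mp hi
    have h1 : i ≠ q + 1 := by omega
    have h2 : i + 1 ≠ 0 := by omega
    have h3 : i + 1 ≠ q + 1 := by omega
    simp [dext, h0, h1, h2, h3]
    rw [if_neg (by omega : i ≠ q), if_neg (by omega : i ≠ q)]; simp
  · intro h
    exact absurd (Finset.mem_range.mpr (by omega)) h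

lemma min_add_min (a b c : ℝ) : min a c + min c b ≤ c + min a b := by
  simp only [min_def]
  split_ifs <;> linarith

lemma rFG_triangle (q : ℕ) (F G H : ℝ → ℝ) (v : ℕ → ℝ) :
    rFG q F H v + rFG q H G v ≤ 1 + rFG q F G v := by
  unfold rFG
  rw [← Finset.sum_add_distrib]
  have key : ∀ i ∈ Finset.range (q + 1),
      min (dext q F v (i + 1) - dext q F v i) (dext q H v (i + 1) - dext q H v i) +
        min (dext q H v (i + 1) - dext q H v i) (dext q G v (i + 1) - dext q G v i) ≤
      (dext q H v (i + 1) - dext q H v i) +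
        min (dext q F v (i + 1) - dext q F v i) (dext q G v (i + 1) - dext q G v i) :=
    fun i _ => min_add_min _ _ _
  calc _ ≤ ∑ i ∈ Finset.range (q + 1), ((dext q H v (i + 1) - dext q H v i) +
        min (dext q F v (i + 1) - dext q F v i) (dext q G v (i + 1) - dext q G v i)) :=
        Finset.sum_le_sum key
    _ = 1 + _ := by rw [Finset.sum_add_distrib, sum_dext q H v]

end DqAux

open DqAux in
/-- For each q ≥ 1, D_q is a metric on the set of distribution functions:
nonnegative (and finite, being real-valued), vanishing exactly when F = G,
symmetric, and satisfying the triangle inequality. -/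
theorem Dq_is_metric (q : ℕ) (hq : 1 ≤ q) :
    (∀ F G : ℝ → ℝ, IsDistFun F → IsDistFun G → 0 ≤ Dq q F G) ∧
    (∀ F G : ℝ → ℝ, IsDistFun F → IsDistFun G → (Dq q F G = 0 ↔ F = G)) ∧
    (∀ F G : ℝ → ℝ, IsDistFun F → IsDistFun G → Dq q F G = Dq q G F) ∧
    (∀ F G H : ℝ → ℝ, IsDistFun F → IsDistFun G → IsDistFun H →
      Dq q F G ≤ Dq q F H + Dq q H G) := by
  refine ⟨?_, ?_, ?_, ?_⟩
  · intro F G hF hG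
    have := sInf_le_one hq hF hG
    unfold Dq
    linarith
  · intro F G hF hG
    constructor
    · intro h
      by_contra hne
      obtain ⟨x, hx⟩ := Function.ne_iff.mp hne
      have hlt : min (F x) (G x) + min (1 - F x) (1 - G x) < 1 := by
        rcases hx.lt_or_gt with hlt | hlt
        · rw [min_eq_left hlt.le, min_eq_right (by linarith)]; linarith
        · rw [min_eq_right hlt.le, min_eq_left (by linarith)]; linarith
      have h1 : sInf {r | ∃ v : ℕ → ℝ, MonotoneOn v (Set.Icc 1 q) ∧ r = rFG q F G v} ≤
          rFG q F G (fun _ => x) := sInf_le_rFG hq hF hG monotoneOn_const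
      rw [rFG_const hq F G x] at h1
      unfold Dq at h
      linarith
    · rintro rfl
      have hS : {r | ∃ v : ℕ → ℝ, MonotoneOn v (Set.Icc 1 q) ∧ r = rFG q F F v} = {1} := by
        ext r
        simp only [Set.mem_setOf_eq, Set.mem_singleton_iff]
        constructor
        · rintro ⟨v, hv, rfl⟩; exact rFG_self q F v
        · rintro rfl; exact ⟨fun _ => 0, monotoneOn_const, (rFG_self q F _).symm⟩
      unfold Dq
      rw [hS, csInf_singleton]
      ring
  · intro F G hF hG
    unfold Dq
    congr 2
    ext r
    constructor <;> rintro ⟨v, hv, rfl⟩ <;> exact ⟨v, hv, rFG_comm q _ _ v⟩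
  · intro F G H hF hG hH
    have key : sInf {r | ∃ v : ℕ → ℝ, MonotoneOn v (Set.Icc 1 q) ∧ r = rFG q F H v} +
        sInf {r | ∃ v : ℕ → ℝ, MonotoneOn v (Set.Icc 1 q) ∧ r = rFG q H G v} - 1 ≤
        sInf {r | ∃ v : ℕ → ℝ, MonotoneOn v (Set.Icc 1 q) ∧ r = rFG q F G v} := by
      apply le_csInf (set_nonempty q F G)
      rintro r ⟨v, hv, rfl⟩
      have h1 := sInf_le_rFG hq hF hH hv
      have h2 := sInf_le_rFG hq hH hG hv
      have h3 := rFG_triangle q F G H v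
      linarith
    unfold Dq
    linarith
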